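/- arXiv:quant-ph/0205163 — 13 statements merged into one kernel-verified Lean document; each statement's English description precedes it below -/
import Mathlib

section
/- Let (Σ, L, ξ) be a state property system with Cartan map κ. Then the pair (Σ, κ(L)), where κ(L) = {κ(a) | a ∈ L}, is a closure space: ∅ ∈ κ(L), Σ ∈ κ(L), and κ(L) is closed under arbitrary nonempty intersections. -/
/-- A state property system `(Σ, L, ξ)`: a set of states `S`, a complete lattice `L`
(bottom `⊥ = 0`, top `⊤ = I`) and a map `ξ` sending each state to the set of properties
actual in it, such that `0` is never actual, actual properties are closed under arbitrary
infima (of arbitrary families, in particular `⊤ = sInf ∅` is always actual), and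
`a ≤ b ↔ ∀ r, a ∈ ξ r → b ∈ ξ r`. -/
structure SPS (S : Type*) (L : Type*) [CompleteLattice L] where
  ξ : S → Set L
  bot_not_mem : ∀ p, ⊥ ∉ ξ p
  sInf_mem : ∀ p, ∀ A ⊆ ξ p, sInf A ∈ ξ p
  le_iff : ∀ a b : L, a ≤ b ↔ ∀ r, a ∈ ξ r → b ∈ ξ r

/-- The Cartan map `κ : L → P(Σ)`, `κ a = {p | a ∈ ξ p}`. -/
def SPS.cartan {S L : Type*} [CompleteLattice L] (P : SPS S L) (a : L) : Set S :=
  {p | a ∈ P.ξ p}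

/-- `a` and `b` are separated by a super selection rule. -/
def SPS.ssr {S L : Type*} [CompleteLattice L] (P : SPS S L) (a b : L) : Prop :=
  ∀ p, a ⊔ b ∈ P.ξ p → a ∈ P.ξ p ∨ b ∈ P.ξ p

/-- `a` is a classical property: it has a complement `c` with `a ⊔ c = ⊤`, `a ⊓ c = ⊥`
and `a` ssr `c`. -/
def SPS.IsClassical {S L : Type*} [CompleteLattice L] (P : SPS S L) (a : L) : Prop :=
  ∃ c : L, a ⊔ c = ⊤ ∧ a ⊓ c = ⊥ ∧ P.ssr a c

/-- `(X, F)` is a closure space: `∅ ∈ F`, `X ∈ F`, and `F` is closed under arbitrary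
nonempty intersections. -/
def IsClosureSpace {X : Type*} (F : Set (Set X)) : Prop :=
  ∅ ∈ F ∧ Set.univ ∈ F ∧ ∀ G ⊆ F, G.Nonempty → ⋂₀ G ∈ F

/-- In a closure space `(X, F)`, a set is closed iff it is in `F`, open iff its complement
is in `F`, and clopen iff both. -/
def IsClopenIn {X : Type*} (F : Set (Set X)) (A : Set X) : Prop :=
  A ∈ F ∧ Aᶜ ∈ F

/-- A closure space is connected iff its only clopen subsets are `∅` and `X`. -/
def IsConnectedCS {X : Type*} (F : Set (Set X)) : Prop :=
  ∀ A : Set X, IsClopenIn F A → A = ∅ ∨ A = Set.univ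

/-- A subset `A` of a closure space `(X, F)` is connected iff the induced subspace
`(A, {F ∩ A | F ∈ F})` is connected, i.e. the only subsets of `A` that are clopen in the
trace closure space are `∅` and `A`. -/
def IsConnectedSubset {X : Type*} (F : Set (Set X)) (A : Set X) : Prop :=
  ∀ B ⊆ A, (∃ C ∈ F, B = C ∩ A) → (∃ D ∈ F, A \ B = D ∩ A) → B = ∅ ∨ B = A

/-- The connection component of `x`: the union of all connected subsets containing `x`. -/
def component {X : Type*} (F : Set (Set X)) (x : X) : Set X :=
  ⋃₀ {A : Set X | x ∈ A ∧ IsConnectedSubset F A}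

/-- The closure operator of a closure space: `cl A` is the intersection of all members of
`F` containing `A` (the least such member, i.e. the supremum operation of the lattice `F`
applied to unions). -/
def closureOf {X : Type*} (F : Set (Set X)) (A : Set X) : Set X :=
  ⋂₀ {C ∈ F | A ⊆ C}

/-- For a state property system `(Σ, L, ξ)` with Cartan map `κ`,
the pair `(Σ, κ(L))` with `κ(L) = {κ a | a ∈ L}` is a closure space: it contains `∅`
and `Σ`, and is closed under arbitrary nonempty intersections. -/
theorem stmt_0 {S L : Type*} [CompleteLattice L] (P : SPS S L) :
    IsClosureSpace (Set.range P.cartan) := by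
  refine ⟨⟨⊥, ?_⟩, ⟨⊤, ?_⟩, ?_⟩
  · ext p; simp [SPS.cartan, P.bot_not_mem p]
  · ext p
    have := P.sInf_mem p ∅ (by simp)
    simp only [sInf_empty] at this
    simp [SPS.cartan, this]
  · intro G hG _
    refine ⟨sInf {a | P.cartan a ∈ G}, ?_⟩
    ext p
    simp only [SPS.cartan, Set.mem_sInter, Set.mem_setOf_eq]
    constructor
    · intro h t ht
      obtain ⟨a, rfl⟩ := hG ht
      exact (P.le_iff _ a).mp (sInf_le ht) p h
    · intro h
      exact P.sInf_mem p _ (fun a ha => h _ ha)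
end

section
/- Let (Σ, F) be a closure space and define ξ' : Σ → P(F) by ξ'(x) = {F ∈ F | x ∈ F}. Then (Σ, F, ξ') is a state property system, where F is ordered by inclusion (so that F is a complete lattice with infima given by intersections, bottom ∅ and top Σ). -/
/-- For a closure space `(Σ, F)`, setting `ξ' x = {A ∈ F | x ∈ A}`,
the triple `(Σ, F, ξ')` is a state property system, where `F` is ordered by inclusion:
it is a complete lattice with infima given by intersections (the infimum of the empty
family being the top element `Σ = univ`), bottom `∅` and top `Σ`.  Spelled out, the three
axioms of a state property system read:
(i) the bottom `∅` is in no `ξ' x`;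
(ii) the infimum (in `F`) of any family of members of `ξ' x` is again in `ξ' x`
    (the infimum of a nonempty family is its intersection, that of the empty family is `univ`);
(iii) for `A, B ∈ F`: `A ⊆ B ↔ ∀ r, A ∈ ξ' r → B ∈ ξ' r`. -/
theorem stmt_1 {X : Type*} (F : Set (Set X)) (hF : IsClosureSpace F)
    (ξ' : X → Set (Set X)) (hξ' : ∀ x, ξ' x = {A ∈ F | x ∈ A}) :
    (∀ x, ∅ ∉ ξ' x) ∧
    (∀ x, Set.univ ∈ ξ' x) ∧
    (∀ x, ∀ G ⊆ ξ' x, G.Nonempty → ⋂₀ G ∈ ξ' x) ∧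
    (∀ A ∈ F, ∀ B ∈ F, (A ⊆ B ↔ ∀ r, A ∈ ξ' r → B ∈ ξ' r)) := by
  obtain ⟨_he, huniv, hInter⟩ := hF
  refine ⟨fun x hx => ?_, fun x => ?_, fun x G hG hGne => ?_, fun A hA B hB => ?_⟩
  · rw [hξ'] at hx; exact hx.2
  · rw [hξ']; exact ⟨huniv, trivial⟩
  · rw [hξ']
    refine ⟨hInter G (fun C hC => ((hξ' x ▸ hG hC) : _).1) hGne, ?_⟩
    exact fun C hC => ((hξ' x ▸ hG hC) : _).2
  · constructor
    · intro hAB r hr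
      rw [hξ'] at hr ⊢
      exact ⟨hB, hAB hr.2⟩
    · intro h r hr
      have := h r (by rw [hξ']; exact ⟨hA, hr⟩)
      rw [hξ'] at this
      exact this.2
end

section
/- Let (Σ, L, ξ) be a state property system with Cartan map κ. For a, b ∈ L the following are equivalent: (1) a ssr b; (2) κ(a ∨ b) = κ(a) ∪ κ(b); (3) κ(a) ∪ κ(b) ∈ κ(L), i.e., κ(a) ∪ κ(b) = κ(c) for some c ∈ L. -/
/-- For a state property system with Cartan map `κ` and `a b : L`, the
following are equivalent: (1) `a ssr b`; (2) `κ (a ⊔ b) = κ a ∪ κ b`;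
(3) `κ a ∪ κ b ∈ κ(L)`, i.e. `κ a ∪ κ b = κ c` for some `c`. -/
theorem stmt_2 {S L : Type*} [CompleteLattice L] (P : SPS S L) (a b : L) :
    (P.ssr a b ↔ P.cartan (a ⊔ b) = P.cartan a ∪ P.cartan b) ∧
    (P.ssr a b ↔ ∃ c : L, P.cartan a ∪ P.cartan b = P.cartan c) := by
  have h1 : P.ssr a b → P.cartan (a ⊔ b) = P.cartan a ∪ P.cartan b := by
    intro hs
    ext p
    constructor
    · exact fun hp => hs p hp
    · rintro (hp | hp)
      · exact (P.le_iff a (a ⊔ b)).mp le_sup_left p hp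
      · exact (P.le_iff b (a ⊔ b)).mp le_sup_right p hp
  have h3 : (∃ c : L, P.cartan a ∪ P.cartan b = P.cartan c) → P.ssr a b := by
    rintro ⟨c, hc⟩ p hp
    have ha : a ≤ c := (P.le_iff a c).mpr fun r hr =>
      (hc ▸ (Set.mem_union_left _ hr : r ∈ P.cartan a ∪ P.cartan b) : r ∈ P.cartan c)
    have hb : b ≤ c := (P.le_iff b c).mpr fun r hr =>
      (hc ▸ (Set.mem_union_right _ hr : r ∈ P.cartan a ∪ P.cartan b) : r ∈ P.cartan c)
    have : c ∈ P.ξ p := (P.le_iff (a ⊔ b) c).mp (sup_le ha hb) p hp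
    have : p ∈ P.cartan a ∪ P.cartan b := hc ▸ this
    exact this
  constructor
  · exact ⟨h1, fun h => h3 ⟨a ⊔ b, h.symm⟩⟩
  · exact ⟨fun hs => ⟨a ⊔ b, (h1 hs).symm⟩, h3⟩
end

section
/- Let (Σ, L, ξ) be a state property system and let a ∈ L be a classical property. Then its complement is unique: if b and b' both satisfy a ∨ b = I, a ∧ b = 0, a ssr b and a ∨ b' = I, a ∧ b' = 0, a ssr b', then b = b'. Moreover the complement a^c is itself a classical property and (a^c)^c = a. -/
/-- If `a` is a classical property of a state property system, its complement
is unique: any `b, b'` with `a ⊔ b = ⊤`, `a ⊓ b = ⊥`, `a ssr b` and likewise for `b'`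
satisfy `b = b'`.  Moreover the complement `b = a^c` is itself a classical property, with
complement `a`, i.e. `(a^c)^c = a` (witnessed by `b ⊔ a = ⊤`, `b ⊓ a = ⊥`, `b ssr a`). -/
theorem stmt_3 {S L : Type*} [CompleteLattice L] (P : SPS S L) (a b b' : L)
    (hb1 : a ⊔ b = ⊤) (hb2 : a ⊓ b = ⊥) (hb3 : P.ssr a b)
    (hb'1 : a ⊔ b' = ⊤) (hb'2 : a ⊓ b' = ⊥) (hb'3 : P.ssr a b') :
    b = b' ∧ P.IsClassical b ∧ (b ⊔ a = ⊤ ∧ b ⊓ a = ⊥ ∧ P.ssr b a) := by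

  have htop : ∀ r, (⊤ : L) ∈ P.ξ r := by
    intro r
    have := P.sInf_mem r ∅ (by simp)
    simpa using this
  have hinf : ∀ (x y : L) r, x ∈ P.ξ r → y ∈ P.ξ r → x ⊓ y ∈ P.ξ r := by
    intro x y r hx hy
    have := P.sInf_mem r {x, y} (by intro z hz; rcases hz with rfl | rfl <;> simpa)
    simpa using this
  have key : ∀ c c' : L, a ⊓ c = ⊥ → a ⊔ c' = ⊤ → a ⊓ c' = ⊥ → P.ssr a c' → c ≤ c' := by
    intro c c' hc2 hc'1 hc'2 hc'3
    rw [P.le_iff]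
    intro r hr
    have h1 : a ⊔ c' ∈ P.ξ r := hc'1 ▸ htop r
    rcases hc'3 r h1 with ha | h
    · exfalso
      have := hinf a c r ha hr
      rw [hc2] at this
      exact P.bot_not_mem r this
    · exact h
  have hbb' : b = b' := le_antisymm (key b b' hb2 hb'1 hb'2 hb'3) (key b' b hb'2 hb1 hb2 hb3)
  have hssr : P.ssr b a := by
    intro p hp
    rw [sup_comm] at hp
    exact (hb3 p hp).symm
  exact ⟨hbb', ⟨a, by rw [sup_comm]; exact hb1, by rw [inf_comm]; exact hb2, hssr⟩,
    by rw [sup_comm]; exact hb1, by rw [inf_comm]; exact hb2, hssr⟩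
end

section
/- Let (Σ, L, ξ) be a state property system with Cartan map κ, and let a, b ∈ L be classical properties with complements a^c, b^c. Then: (1) for every p ∈ Σ, a ∈ ξ(p) if and only if a^c ∉ ξ(p); (2) κ(a^c) = Σ \ κ(a); (3) if a ≤ b then b^c ≤ a^c. -/
/-- Let `a, b` be classical properties with complements `ac, bc`. Then:
(1) `a ∈ ξ p ↔ ac ∉ ξ p` for every state `p`;
(2) `κ ac = (κ a)ᶜ` (set complement in `Σ`);
(3) `a ≤ b → bc ≤ ac`. -/
theorem stmt_4 {S L : Type*} [CompleteLattice L] (P : SPS S L) (a ac b bc : L)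
    (ha1 : a ⊔ ac = ⊤) (ha2 : a ⊓ ac = ⊥) (ha3 : P.ssr a ac)
    (hb1 : b ⊔ bc = ⊤) (hb2 : b ⊓ bc = ⊥) (hb3 : P.ssr b bc) :
    (∀ p, a ∈ P.ξ p ↔ ac ∉ P.ξ p) ∧
    P.cartan ac = (P.cartan a)ᶜ ∧
    (a ≤ b → bc ≤ ac) := by
  have htop : ∀ p, (⊤ : L) ∈ P.ξ p := by
    intro p
    have := P.sInf_mem p ∅ (by simp)
    simpa using this
  have hiff : ∀ p, a ∈ P.ξ p ↔ ac ∉ P.ξ p := by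
    intro p
    constructor
    · intro hap hacp
      have : (⊥ : L) ∈ P.ξ p := by
        rw [← ha2]
        have := P.sInf_mem p {a, ac} (by
          intro x hx
          rcases hx with rfl | hx
          · exact hap
          · simpa using hx ▸ hacp)
        simpa [sInf_pair] using this
      exact P.bot_not_mem p this
    · intro h
      rcases ha3 p (ha1 ▸ htop p) with h1 | h1
      · exact h1
      · exact absurd h1 h
  refine ⟨hiff, ?_, ?_⟩
  · ext p
    simp only [SPS.cartan, Set.mem_compl_iff, Set.mem_setOf_eq]
    rw [hiff p]
    tauto
  · intro hab
    rw [P.le_iff]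
    intro p hbcp
    by_contra hacp
    have hap : a ∈ P.ξ p := (hiff p).2 hacp
    have hbp : b ∈ P.ξ p := (P.le_iff a b).1 hab p hap
    have : (⊥ : L) ∈ P.ξ p := by
      rw [← hb2]
      have := P.sInf_mem p {b, bc} (by
        intro x hx
        rcases hx with rfl | hx
        · exact hbp
        · simpa using hx ▸ hbcp)
      simpa [sInf_pair] using this
    exact P.bot_not_mem p this
end

section
/- Let (Σ, L, ξ) be a state property system with Cartan map κ, and consider the closure space (Σ, κ(L)). For a ∈ L: a is a classical property if and only if κ(a) is clopen in (Σ, κ(L)). -/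
/-- For a state property system with Cartan map `κ` and the associated
closure space `(Σ, κ(L))`: a property `a` is classical iff `κ a` is clopen in `(Σ, κ(L))`. -/
theorem stmt_5 {S L : Type*} [CompleteLattice L] (P : SPS S L) (a : L) :
    P.IsClassical a ↔ IsClopenIn (Set.range P.cartan) (P.cartan a) := by
  have top_mem : ∀ p, (⊤ : L) ∈ P.ξ p := by
    intro p
    simpa using P.sInf_mem p ∅ (by simp)
  have mono : ∀ {x y : L} {r}, x ≤ y → x ∈ P.ξ r → y ∈ P.ξ r := fun {x y r} h =>
    (P.le_iff x y).1 h r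
  constructor
  · rintro ⟨c, hsup, hinf, hssr⟩
    refine ⟨⟨a, rfl⟩, ⟨c, ?_⟩⟩
    ext p
    simp only [SPS.cartan, Set.mem_setOf_eq, Set.mem_compl_iff]
    constructor
    · intro hc ha
      have : a ⊓ c ∈ P.ξ p := by
        have := P.sInf_mem p {a, c} (by
          intro x hx; rcases hx with rfl | hx
          · exact ha
          · simpa using hx ▸ hc)
        simpa [sInf_pair] using this
      exact P.bot_not_mem p (hinf ▸ this)
    · intro ha
      rcases hssr p (by rw [hsup]; exact top_mem p) with h | h
      · exact absurd h ha
      · exact h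
  · rintro ⟨-, ⟨b, hb⟩⟩
    have hb' : ∀ p, b ∈ P.ξ p ↔ a ∉ P.ξ p := by
      intro p
      constructor
      · intro h; exact (Set.ext_iff.1 hb p).1 h
      · intro h; exact (Set.ext_iff.1 hb p).2 h
    refine ⟨b, ?_, ?_, ?_⟩
    · refine le_antisymm le_top ?_
      rw [P.le_iff]
      intro r _
      by_cases ha : a ∈ P.ξ r
      · exact mono le_sup_left ha
      · exact mono le_sup_right ((hb' r).2 ha)
    · refine le_antisymm ?_ bot_le
      rw [P.le_iff]
      intro r h
      have ha := mono inf_le_left h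
      have hbb := mono inf_le_right h
      exact absurd ha ((hb' r).1 hbb)
    · intro p _
      by_cases ha : a ∈ P.ξ p
      · exact Or.inl ha
      · exact Or.inr ((hb' p).2 ha)
end

section
/- Let (Σ, L, ξ) be a state property system with Cartan map κ. The following are equivalent: (1) the properties 0 and I are the only classical properties of (Σ, L, ξ); (2) the closure space (Σ, κ(L)) is connected. -/
/-- For a state property system with Cartan map `κ`, the following are
equivalent: (1) `⊥ = 0` and `⊤ = I` are the only classical properties;
(2) the closure space `(Σ, κ(L))` is connected. -/
theorem stmt_6 {S L : Type*} [CompleteLattice L] (P : SPS S L) :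
    (∀ a : L, P.IsClassical a → a = ⊥ ∨ a = ⊤) ↔
      IsConnectedCS (Set.range P.cartan) := by
  -- basic facts
  have hup : ∀ {a b : L} (_ : a ≤ b) (r : S), a ∈ P.ξ r → b ∈ P.ξ r := by
    intro a b hab r h
    exact (P.le_iff a b).mp hab r h
  have htop : ∀ p : S, (⊤ : L) ∈ P.ξ p := by
    intro p
    have := P.sInf_mem p ∅ (by simp)
    simpa using this
  have hinf : ∀ (p : S) (a b : L), a ∈ P.ξ p → b ∈ P.ξ p → a ⊓ b ∈ P.ξ p := by
    intro p a b ha hb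
    have := P.sInf_mem p {a, b} (by intro x hx; rcases hx with rfl | hx <;> simp_all)
    simpa using this
  constructor
  · -- (1) → (2)
    intro h1 A hA
    obtain ⟨⟨a, ha⟩, ⟨c, hc⟩⟩ := hA
    subst ha
    have hacl : P.IsClassical a := by
      refine ⟨c, ?_, ?_, ?_⟩
      · refine le_antisymm le_top ((P.le_iff ⊤ (a ⊔ c)).mpr ?_)
        intro r _
        by_cases hr : r ∈ P.cartan a
        · exact hup le_sup_left r hr
        · exact hup le_sup_right r (show r ∈ P.cartan c from hc ▸ hr)
      · refine le_antisymm ((P.le_iff (a ⊓ c) ⊥).mpr ?_) bot_le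
        intro r hr
        have ha' : r ∈ P.cartan a := hup inf_le_left r hr
        have hc' : r ∈ (P.cartan a)ᶜ := hc ▸ (show r ∈ P.cartan c from hup inf_le_right r hr)
        exact absurd ha' hc'
      · intro p _
        by_cases hp : p ∈ P.cartan a
        · exact Or.inl hp
        · exact Or.inr (show p ∈ P.cartan c from hc ▸ hp)
    rcases h1 a hacl with rfl | rfl
    · left
      ext p; simp [SPS.cartan, P.bot_not_mem p]
    · right
      ext p; simp [SPS.cartan, htop p]
  · -- (2) → (1)
    intro h2 a ⟨c, hsup, hinf', hssr⟩
    have hcov : ∀ p : S, a ∈ P.ξ p ∨ c ∈ P.ξ p := by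
      intro p
      exact hssr p (hsup ▸ htop p)
    have hdisj : ∀ p : S, a ∈ P.ξ p → c ∈ P.ξ p → False := by
      intro p ha hc
      have := hinf p a c ha hc
      rw [hinf'] at this
      exact P.bot_not_mem p this
    have hcompl : (P.cartan a)ᶜ = P.cartan c := by
      ext p
      simp only [Set.mem_compl_iff, SPS.cartan, Set.mem_setOf_eq]
      constructor
      · intro h; rcases hcov p with h' | h'
        · exact absurd h' h
        · exact h'
      · intro hc ha; exact hdisj p ha hc
    have hclopen : IsClopenIn (Set.range P.cartan) (P.cartan a) :=
      ⟨⟨a, rfl⟩, hcompl ▸ ⟨c, rfl⟩⟩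
    rcases h2 _ hclopen with h | h
    · left
      refine le_antisymm ((P.le_iff a ⊥).mpr ?_) bot_le
      intro r hr
      exact absurd (Set.eq_empty_iff_forall_notMem.mp h r) (by exact fun hn => hn hr)
    · right
      refine le_antisymm le_top ((P.le_iff ⊤ a).mpr ?_)
      intro r _
      show r ∈ P.cartan a
      rw [h]; trivial
end

section
/- Let (Σ, F) be a closure space and let G(Σ, F) = (Σ, F, ξ') be the associated state property system, where ξ'(x) = {F ∈ F | x ∈ F} and F is ordered by inclusion. Then (Σ, F) is connected if and only if (Σ, F, ξ') is a pure nonclassical state property system (i.e., its only classical properties are ∅ and Σ). -/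
/-- Let `(Σ, F)` be a closure space and `G(Σ, F) = (Σ, F, ξ')` the associated
state property system, `ξ' x = {A ∈ F | x ∈ A}`, with `F` ordered by inclusion
(bottom `∅`, top `univ`, meet = intersection, and join `A ⊔ B = cl (A ∪ B)`, the least
member of `F` containing `A ∪ B`).  Then `(Σ, F)` is connected iff `(Σ, F, ξ')` is a pure
nonclassical state property system, i.e. its only classical properties are `∅` and `Σ`.
Here `A ∈ F` is classical iff there is `B ∈ F` with `A ⊔ B = univ`, `A ⊓ B = A ∩ B = ∅`
and `A ssr B`, the latter meaning `A ⊔ B ∈ ξ' p → A ∈ ξ' p ∨ B ∈ ξ' p`, i.e.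
`p ∈ cl (A ∪ B) → p ∈ A ∨ p ∈ B`. -/
theorem stmt_7 {X : Type*} (F : Set (Set X)) (hF : IsClosureSpace F) :
    IsConnectedCS F ↔
      ∀ A ∈ F,
        (∃ B ∈ F, closureOf F (A ∪ B) = Set.univ ∧ A ∩ B = ∅ ∧
            ∀ p ∈ closureOf F (A ∪ B), p ∈ A ∨ p ∈ B) →
        A = ∅ ∨ A = Set.univ := by
  constructor
  · rintro hconn A hA ⟨B, hB, hcl, hdisj, hssr⟩
    have hcov : ∀ p : X, p ∈ A ∨ p ∈ B := fun p => hssr p (hcl ▸ Set.mem_univ p)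
    have hBc : B = Aᶜ := by
      ext p
      constructor
      · intro hp hpA
        have := Set.eq_empty_iff_forall_notMem.mp hdisj p
        exact this ⟨hpA, hp⟩
      · intro hp
        rcases hcov p with h | h
        · exact absurd h hp
        · exact h
    exact hconn A ⟨hA, hBc ▸ hB⟩
  · intro h A ⟨hA, hAc⟩
    refine h A hA ⟨Aᶜ, hAc, ?_, by simp, ?_⟩
    · have : closureOf F (A ∪ Aᶜ) = closureOf F Set.univ := by rw [Set.union_compl_self]
      rw [this]
      apply Set.eq_univ_of_forall
      intro p C hC
      exact hC.2 (Set.mem_univ p)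
    · intro p _
      by_cases hp : p ∈ A
      · exact Or.inl hp
      · exact Or.inr hp
end

section
/- Let (Σ, L, ξ) be a state property system with Cartan map κ, let ω be a connection component of the closure space (Σ, κ(L)), and suppose there exists s(ω) ∈ L with κ(s(ω)) = ω. Define Σ_ω = ω, L_ω = [0, s(ω)] = {a ∈ L | 0 ≤ a ≤ s(ω)} (a complete lattice with the order inherited from L), and ξ_ω : Σ_ω → P(L_ω), ξ_ω(p) = ξ(p) ∩ L_ω. Then (Σ_ω, L_ω, ξ_ω) is a state property system. -/
/-- Let `(Σ, L, ξ)` be a state property system with Cartan map `κ`, let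
`ω = K x` be a connection component of the closure space `(Σ, κ(L))` and suppose
`s(ω) ∈ L` satisfies `κ (s ω) = ω`.  With `Σ_ω = ω`, `L_ω = [0, s ω] = Set.Iic (s ω)`
(a complete lattice with the order inherited from `L`) and `ξ_ω p = ξ p ∩ L_ω`, the triple
`(Σ_ω, L_ω, ξ_ω)` is a state property system.  (The state property system `Q` below is
pinned by the requirement `a ∈ Q.ξ p ↔ a ∈ ξ p`, i.e. `Q.ξ p = ξ p ∩ L_ω`.) -/
theorem stmt_10 {S L : Type*} [CompleteLattice L] (P : SPS S L) (x : S) (sω : L)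
    (hs : P.cartan sω = component (Set.range P.cartan) x) :
    ∃ Q : SPS ↥(component (Set.range P.cartan) x) ↥(Set.Iic sω),
      ∀ (p : ↥(component (Set.range P.cartan) x)) (a : ↥(Set.Iic sω)),
        a ∈ Q.ξ p ↔ (a : L) ∈ P.ξ (p : S) := by
  have hmem : ∀ p : ↥(component (Set.range P.cartan) x), sω ∈ P.ξ (p : S) := by
    intro p
    have : (p : S) ∈ P.cartan sω := by rw [hs]; exact p.2
    exact this
  refine ⟨⟨fun p => {a | (a : L) ∈ P.ξ (p : S)}, ?_, ?_, ?_⟩, fun p a => Iff.rfl⟩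
  · intro p hp
    exact P.bot_not_mem (p : S) hp
  · intro p A hA
    have h1 : (↑(sInf A) : L) = sω ⊓ sInf ((↑) '' A) := rfl
    show (↑(sInf A) : L) ∈ P.ξ (p : S)
    rw [h1, ← sInf_insert]
    apply P.sInf_mem
    intro y hy
    rcases hy with rfl | ⟨b, hb, rfl⟩
    · exact hmem p
    · exact hA hb
  · intro a b
    constructor
    · intro hab r hr
      exact (P.le_iff (a : L) (b : L)).mp hab (r : S) hr
    · intro h
      show (a : L) ≤ (b : L)
      rw [P.le_iff]
      intro r hr
      have hrs : sω ∈ P.ξ r := (P.le_iff (a : L) sω).mp a.2 r hr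
      have hrω : r ∈ component (Set.range P.cartan) x := by rw [← hs]; exact hrs
      exact h ⟨r, hrω⟩ hr
end

section
/- Let (Σ, L, ξ) be a state property system with Cartan map κ, let ω be a connection component of the closure space (Σ, κ(L)), and suppose there exists s(ω) ∈ L with κ(s(ω)) = ω. Then the state property system (Σ_ω, L_ω, ξ_ω), where Σ_ω = ω, L_ω = [0, s(ω)], and ξ_ω(p) = ξ(p) ∩ L_ω, is pure nonclassical: its only classical properties are 0 and s(ω). -/
lemma singleton_connected {X : Type*} (F : Set (Set X)) (x : X) :
    IsConnectedSubset F {x} := by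
  intro B hB _ _
  rcases Set.subset_singleton_iff_eq.mp hB with h | h
  · exact Or.inl h
  · exact Or.inr h

lemma mem_component_self {X : Type*} (F : Set (Set X)) (x : X) :
    x ∈ component F x :=
  ⟨{x}, ⟨rfl, singleton_connected F x⟩, rfl⟩

lemma component_connected {X : Type*} (F : Set (Set X)) (x : X) :
    IsConnectedSubset F (component F x) := by
  rintro B hB ⟨C, hC, hBC⟩ ⟨D, hD, hKB⟩
  have key : ∀ A : Set X, x ∈ A → IsConnectedSubset F A →
      B ∩ A = ∅ ∨ B ∩ A = A := by
    intro A hxA hAconn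
    have hAK : A ⊆ component F x := fun p hp => ⟨A, ⟨hxA, hAconn⟩, hp⟩
    refine hAconn (B ∩ A) Set.inter_subset_right ⟨C, hC, ?_⟩ ⟨D, hD, ?_⟩
    · rw [hBC]; ext p
      simp only [Set.mem_inter_iff]
      exact ⟨fun ⟨⟨h1, _⟩, h3⟩ => ⟨h1, h3⟩, fun ⟨h1, h3⟩ => ⟨⟨h1, hAK h3⟩, h3⟩⟩
    · have h2 : A \ (B ∩ A) = A \ B := by
        ext p; simp only [Set.mem_diff, Set.mem_inter_iff]; tauto
      rw [h2]
      ext p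
      simp only [Set.mem_diff, Set.mem_inter_iff]
      constructor
      · rintro ⟨hpA, hpB⟩
        have hp : p ∈ D ∩ component F x := by
          rw [← hKB]; exact ⟨hAK hpA, hpB⟩
        exact ⟨hp.1, hpA⟩
      · rintro ⟨hpD, hpA⟩
        have hp : p ∈ component F x \ B := by rw [hKB]; exact ⟨hpD, hAK hpA⟩
        exact ⟨hpA, hp.2⟩
  by_cases hx : x ∈ B
  · right
    apply Set.Subset.antisymm hB
    rintro p ⟨A, ⟨hxA, hAconn⟩, hpA⟩
    rcases key A hxA hAconn with h | h
    · exact absurd (h ▸ (⟨hx, hxA⟩ : x ∈ B ∩ A)) (Set.notMem_empty x)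
    · rw [← h] at hpA; exact hpA.1
  · left
    ext p
    simp only [Set.mem_empty_iff_false, iff_false]
    intro hpB
    rcases hB hpB with ⟨A, ⟨hxA, hAconn⟩, hpA⟩
    rcases key A hxA hAconn with h | h
    · exact absurd (h ▸ (⟨hpB, hpA⟩ : p ∈ B ∩ A)) (Set.notMem_empty p)
    · rw [← h] at hxA; exact hx hxA.1

/-- In the situation of the decomposition, the state property system
`(Σ_ω, L_ω, ξ_ω)` (with `Σ_ω = ω` a connection component of `(Σ, κ(L))`,
`L_ω = [0, s ω] = Set.Iic (s ω)` where `κ (s ω) = ω`, and `ξ_ω p = ξ p ∩ L_ω`) is pure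
nonclassical: its only classical properties are its bottom `0 = ⊥` and its top
`s ω = ⊤`. -/
theorem stmt_11 {S L : Type*} [CompleteLattice L] (P : SPS S L) (x : S) (sω : L)
    (hs : P.cartan sω = component (Set.range P.cartan) x)
    (Q : SPS ↥(component (Set.range P.cartan) x) ↥(Set.Iic sω))
    (hQ : ∀ (p : ↥(component (Set.range P.cartan) x)) (a : ↥(Set.Iic sω)),
      a ∈ Q.ξ p ↔ (a : L) ∈ P.ξ (p : S)) :
    ∀ a : ↥(Set.Iic sω), Q.IsClassical a → a = ⊥ ∨ a = ⊤ := by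
  rintro a ⟨c, hsup, hinf, hssr⟩
  have hF : Set.range P.cartan = Set.range P.cartan := rfl
  -- any state in K makes sω actual
  have hscart : ∀ p : S, p ∈ component (Set.range P.cartan) x → sω ∈ P.ξ p := by
    intro p hp; rw [← hs] at hp; exact hp
  have hmemK : ∀ p : S, sω ∈ P.ξ p → p ∈ component (Set.range P.cartan) x := by
    intro p hp; rw [← hs]; exact hp
  -- coercion facts
  have hsupL : (a : L) ⊔ (c : L) = sω := by
    have := congrArg Subtype.val hsup
    rwa [Set.Iic.coe_sup, Set.Iic.coe_top] at this
  have hinfL : (a : L) ⊓ (c : L) = ⊥ := by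
    have := congrArg Subtype.val hinf
    rwa [Set.Iic.coe_inf, Set.Iic.coe_bot] at this
  -- every state of K makes a or c actual
  have hunion : ∀ p : ↥(component (Set.range P.cartan) x), (a : L) ∈ P.ξ ↑p ∨ (c : L) ∈ P.ξ ↑p := by
    intro p
    have h1 : a ⊔ c ∈ Q.ξ p := by
      rw [hsup, hQ, Set.Iic.coe_top]
      exact hscart ↑p p.2
    rcases hssr p h1 with h | h
    · exact Or.inl ((hQ p a).1 h)
    · exact Or.inr ((hQ p c).1 h)
  -- no state makes both actual
  have hdisj : ∀ p : S, (a : L) ∈ P.ξ p → (c : L) ∈ P.ξ p → False := by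
    intro p ha hc
    have h1 : sInf {(a : L), (c : L)} ∈ P.ξ p := by
      apply P.sInf_mem
      rintro y hy
      rcases hy with rfl | hy
      · exact ha
      · rw [Set.mem_singleton_iff] at hy; rw [hy]; exact hc
    rw [sInf_pair, hinfL] at h1
    exact P.bot_not_mem p h1
  -- a is actual only at states of K
  have haK : ∀ p : S, (a : L) ∈ P.ξ p → p ∈ component (Set.range P.cartan) x := by
    intro p hp
    exact hmemK p ((P.le_iff (a : L) sω).1 a.2 p hp)
  have hcK : ∀ p : S, (c : L) ∈ P.ξ p → p ∈ component (Set.range P.cartan) x := by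
    intro p hp
    exact hmemK p ((P.le_iff (c : L) sω).1 c.2 p hp)
  -- apply connectedness of K to the trace of cartan a
  have hconn := component_connected (Set.range P.cartan) x
  have hcase := hconn (P.cartan (a : L) ∩ component (Set.range P.cartan) x) Set.inter_subset_right
    ⟨P.cartan (a : L), Set.mem_range_self _, rfl⟩
    ⟨P.cartan (c : L), Set.mem_range_self _, ?_⟩
  · rcases hcase with h | h
    · -- a = ⊥
      left
      apply Subtype.ext
      rw [Set.Iic.coe_bot, ← le_bot_iff]
      rw [P.le_iff]
      intro r hr
      exact absurd (h ▸ (⟨hr, haK r hr⟩ : r ∈ P.cartan (a : L) ∩ component (Set.range P.cartan) x))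
        (Set.notMem_empty r)
    · -- a = ⊤
      right
      apply Subtype.ext
      rw [Set.Iic.coe_top]
      refine le_antisymm a.2 ((P.le_iff sω (a : L)).2 fun r hr => ?_)
      have : r ∈ P.cartan (a : L) ∩ component (Set.range P.cartan) x := by rw [h]; exact hmemK r hr
      exact this.1
  · -- K \ (cartan a ∩ component (Set.range P.cartan) x) = cartan c ∩ component (Set.range P.cartan) x
    ext p
    simp only [Set.mem_diff, Set.mem_inter_iff, SPS.cartan, Set.mem_setOf_eq]
    constructor
    · rintro ⟨hpK, hp⟩
      rcases hunion ⟨p, hpK⟩ with h | h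
      · exact absurd ⟨h, hpK⟩ hp
      · exact ⟨h, hpK⟩
    · rintro ⟨hpc, hpK⟩
      exact ⟨hpK, fun hpa => hdisj p hpa.1 hpc⟩
end

section
/- Let (Σ, L, ξ) be a state property system with Cartan map κ, let Ω be the set of connection components of the closure space (Σ, κ(L)), and suppose that for every ω ∈ Ω there exists s(ω) ∈ L with κ(s(ω)) = ω. Let C = {⋁_i s(ω_i) | (ω_i)_i a family of elements of Ω} ∪ {0}. Then for every a ∈ C: if κ(a) is a connected subset of (Σ, κ(L)), then a = 0 or a = s(ω) for some ω ∈ Ω; in particular the atoms of C are exactly the elements s(ω), and every segment [0, a] of C containing no element of C other than 0 and a that is of the form ⋁_i s(ω_i) over a proper nonempty subfamily equals {0, s(ω)} for some ω ∈ Ω or {0}. -/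
section Aux

variable {X : Type*} (F : Set (Set X))

lemma aux_union_connected (𝒜 : Set (Set X)) (p : X)
    (hp : ∀ A ∈ 𝒜, p ∈ A) (hc : ∀ A ∈ 𝒜, IsConnectedSubset F A) :
    IsConnectedSubset F (⋃₀ 𝒜) := by
  set K := ⋃₀ 𝒜 with hK
  have key : ∀ B' C' D' : Set X, C' ∈ F → D' ∈ F → B' ⊆ K →
      B' = C' ∩ K → K \ B' = D' ∩ K → p ∈ B' → K ⊆ B' := by
    intro B' C' D' hC' hD' hBK hBC hKB hpB x hx
    obtain ⟨A, hA, hxA⟩ := hx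
    have hAK : A ⊆ K := Set.subset_sUnion_of_mem hA
    have h1 : B' ∩ A = C' ∩ A := by
      rw [hBC]; ext y
      exact ⟨fun ⟨⟨h1, _⟩, h2⟩ => ⟨h1, h2⟩, fun ⟨h1, h2⟩ => ⟨⟨h1, hAK h2⟩, h2⟩⟩
    have h2 : A \ (B' ∩ A) = D' ∩ A := by
      ext y
      constructor
      · rintro ⟨hyA, hyB⟩
        have hy : y ∈ K \ B' := ⟨hAK hyA, fun h => hyB ⟨h, hyA⟩⟩
        rw [hKB] at hy
        exact ⟨hy.1, hyA⟩
      · rintro ⟨hyD, hyA⟩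
        refine ⟨hyA, fun h => ?_⟩
        have hy : y ∈ K \ B' := by rw [hKB]; exact ⟨hyD, hAK hyA⟩
        exact hy.2 h.1
    rcases hc A hA (B' ∩ A) Set.inter_subset_right ⟨C', hC', h1⟩ ⟨D', hD', h2⟩ with h | h
    · exact (Set.eq_empty_iff_forall_notMem.mp h p ⟨hpB, hp A hA⟩).elim
    · have hxB : x ∈ B' ∩ A := by rw [h]; exact hxA
      exact hxB.1
  intro B hB hBcl hBop
  obtain ⟨C, hC, hBC⟩ := hBcl
  obtain ⟨D, hD, hKB⟩ := hBop
  rcases Set.eq_empty_or_nonempty B with h | ⟨x, hx⟩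
  · exact Or.inl h
  obtain ⟨A0, hA0, _⟩ := hB hx
  have hpK : p ∈ K := Set.subset_sUnion_of_mem hA0 (hp A0 hA0)
  by_cases hpB : p ∈ B
  · exact Or.inr (subset_antisymm hB (key B C D hC hD hB hBC hKB hpB))
  · exfalso
    have hKBB : K \ (K \ B) = B := Set.diff_diff_cancel_left hB
    have h := key (K \ B) D C hD hC Set.diff_subset hKB (by rw [hKBB]; exact hBC)
      ⟨hpK, hpB⟩
    exact (h (hB hx)).2 hx

lemma aux_singleton_connected (x : X) : IsConnectedSubset F {x} := by
  intro B hB _ _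
  rcases Set.subset_singleton_iff_eq.mp hB with h | h
  · exact Or.inl h
  · exact Or.inr h

lemma aux_mem_component (x : X) : x ∈ component F x :=
  ⟨{x}, ⟨rfl, aux_singleton_connected F x⟩, rfl⟩

lemma aux_component_connected (x : X) : IsConnectedSubset F (component F x) :=
  aux_union_connected F _ x (fun _ hA => hA.1) (fun _ hA => hA.2)

lemma aux_connected_subset_component {A : Set X} {x : X} (hx : x ∈ A)
    (hA : IsConnectedSubset F A) : A ⊆ component F x :=
  Set.subset_sUnion_of_mem ⟨hx, hA⟩

lemma aux_component_subset_of_mem {x y : X} (h : x ∈ component F y) :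
    component F x ⊆ component F y := by
  have hu : IsConnectedSubset F (⋃₀ {component F x, component F y}) := by
    refine aux_union_connected F _ x ?_ ?_
    · rintro A (rfl | rfl)
      exacts [aux_mem_component F x, h]
    · rintro A (rfl | rfl)
      exacts [aux_component_connected F x, aux_component_connected F y]
  rw [Set.sUnion_pair] at hu
  have hsub : component F x ∪ component F y ⊆ component F y :=
    aux_connected_subset_component F (Set.mem_union_right _ (aux_mem_component F y)) hu
  exact fun z hz => hsub (Set.mem_union_left _ hz)

lemma aux_component_eq {ω : Set X} (hω : ω ∈ Set.range (component F)) {x : X}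
    (hx : x ∈ ω) : component F x = ω := by
  obtain ⟨y, rfl⟩ := hω
  exact subset_antisymm (aux_component_subset_of_mem F hx)
    (aux_connected_subset_component F hx (aux_component_connected F y))

end Aux

/-- With `Ω` the set of connection components of `(Σ, κ(L))`, `s ω ∈ L` with
`κ (s ω) = ω`, and `C = {⋁_i s ω_i | (ω_i) a family in Ω} ∪ {0}` (empty family giving `⊥`):
(1) for `a ∈ C`, if `κ a` is a connected subset of `(Σ, κ(L))` then `a = 0` or `a = s ω`
    for some `ω ∈ Ω`;
(2) the atoms of `C` (nonbottom elements of `C` with no nonbottom element of `C` strictly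
    below them) are exactly the elements `s ω`, `ω ∈ Ω`;
(3) every segment `[0, a]` of `C` containing no element of `C` other than `0` and `a` that
    is of the form `⋁ s ω_i` over a proper nonempty subfamily (of a family representing
    `a`) equals `{0, s ω}` for some `ω ∈ Ω`, or `{0}`. -/
theorem stmt_13 {S L : Type*} [CompleteLattice L] (P : SPS S L) (s : Set S → L)
    (Ω : Set (Set S)) (hΩ : Ω = Set.range (component (Set.range P.cartan)))
    (hs : ∀ ω ∈ Ω, P.cartan (s ω) = ω)
    (C : Set L) (hC : C = {a : L | ∃ T ⊆ Ω, a = sSup (s '' T)}) :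
    (∀ a ∈ C, IsConnectedSubset (Set.range P.cartan) (P.cartan a) →
      a = ⊥ ∨ ∃ ω ∈ Ω, a = s ω) ∧
    (∀ a ∈ C, ((a ≠ ⊥ ∧ ∀ b ∈ C, b < a → b = ⊥) ↔ ∃ ω ∈ Ω, a = s ω)) ∧
    (∀ a ∈ C, ∀ T ⊆ Ω, a = sSup (s '' T) →
      (¬ ∃ b ∈ C, b ≤ a ∧ b ≠ ⊥ ∧ b ≠ a ∧
          ∃ T' ⊆ T, T'.Nonempty ∧ T' ≠ T ∧ b = sSup (s '' T')) →
      (∃ ω ∈ Ω, {b ∈ C | b ≤ a} = {⊥, s ω}) ∨ {b ∈ C | b ≤ a} = {⊥}) := by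
  set F := Set.range P.cartan with hF
  -- basic facts
  have hmono : ∀ a b : L, a ≤ b → P.cartan a ⊆ P.cartan b := by
    intro a b hab p hp
    exact (P.le_iff a b).mp hab p hp
  have hbot : P.cartan (⊥ : L) = ∅ :=
    Set.eq_empty_iff_forall_notMem.mpr fun p hp => P.bot_not_mem p hp
  have hωne : ∀ ω ∈ Ω, ω.Nonempty := by
    intro ω hω
    rw [hΩ] at hω
    obtain ⟨y, rfl⟩ := hω
    exact ⟨y, aux_mem_component F y⟩
  have hΩeq : ∀ ω ∈ Ω, ∀ ω' ∈ Ω, ω ⊆ ω' → ω = ω' := by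
    intro ω hω ω' hω' hsub
    obtain ⟨x, hx⟩ := hωne ω hω
    rw [hΩ] at hω hω'
    rw [← aux_component_eq F hω hx, ← aux_component_eq F hω' (hsub hx)]
  have hsbot : ∀ ω ∈ Ω, s ω ≠ ⊥ := by
    intro ω hω h
    obtain ⟨x, hx⟩ := hωne ω hω
    have : x ∈ P.cartan (s ω) := (hs ω hω).symm ▸ hx
    rw [h, hbot] at this
    exact this
  have hsC : ∀ ω ∈ Ω, s ω ∈ C := by
    intro ω hω
    rw [hC]
    exact ⟨{ω}, Set.singleton_subset_iff.mpr hω, by simp⟩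
  have hbotC : (⊥ : L) ∈ C := by
    rw [hC]; exact ⟨∅, Set.empty_subset _, by simp⟩
  -- elements of C below some s ω come from subfamilies of {ω}
  have hsub : ∀ T' ⊆ Ω, ∀ ω ∈ Ω, sSup (s '' T') ≤ s ω →
      sSup (s '' T') = ⊥ ∨ sSup (s '' T') = s ω := by
    intro T' hT' ω hω hle
    have hall : ∀ ω' ∈ T', ω' = ω := by
      intro ω' hω'
      have h1 : s ω' ≤ s ω := le_trans (le_sSup (Set.mem_image_of_mem s hω')) hle
      have h2 : ω' ⊆ ω := by
        have := hmono _ _ h1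
        rwa [hs ω' (hT' hω'), hs ω hω] at this
      exact hΩeq ω' (hT' hω') ω hω h2
    have hT'sub : T' ⊆ {ω} := fun ω' h => hall ω' h
    rcases Set.subset_singleton_iff_eq.mp hT'sub with rfl | rfl
    · left; simp
    · right; simp
  refine ⟨?_, ?_, ?_⟩
  -- Part 1
  · intro a ha hconn
    rw [hC] at ha
    obtain ⟨T, hT, rfl⟩ := ha
    rcases Set.eq_empty_or_nonempty T with rfl | ⟨ω₁, hω₁⟩
    · left; simp
    · right
      obtain ⟨x, hx⟩ := hωne ω₁ (hT hω₁)
      have hωsub : ∀ ω ∈ T, ω ⊆ P.cartan (sSup (s '' T)) := by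
        intro ω hω
        have := hmono _ _ (le_sSup (Set.mem_image_of_mem s hω))
        rwa [hs ω (hT hω)] at this
      have hxκ : x ∈ P.cartan (sSup (s '' T)) := hωsub ω₁ hω₁ hx
      have hκsub : P.cartan (sSup (s '' T)) ⊆ ω₁ := by
        have h1 := aux_connected_subset_component F hxκ hconn
        rwa [aux_component_eq F (hΩ ▸ hT hω₁) hx] at h1
      have hall : ∀ ω ∈ T, ω = ω₁ := fun ω hω =>
        hΩeq ω (hT hω) ω₁ (hT hω₁) ((hωsub ω hω).trans hκsub)
      have hTeq : T = {ω₁} :=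
        subset_antisymm (fun ω h => hall ω h) (Set.singleton_subset_iff.mpr hω₁)
      exact ⟨ω₁, hT hω₁, by rw [hTeq]; simp⟩
  -- Part 2
  · intro a ha
    constructor
    · rintro ⟨hane, hatom⟩
      rw [hC] at ha
      obtain ⟨T, hT, rfl⟩ := ha
      rcases Set.eq_empty_or_nonempty T with rfl | ⟨ω, hω⟩
      · exact absurd (by simp) hane
      · refine ⟨ω, hT hω, ?_⟩
        have hle : s ω ≤ sSup (s '' T) := le_sSup (Set.mem_image_of_mem s hω)
        rcases lt_or_eq_of_le hle with hlt | heq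
        · exact absurd (hatom (s ω) (hsC ω (hT hω)) hlt) (hsbot ω (hT hω))
        · exact heq.symm
    · rintro ⟨ω, hω, rfl⟩
      refine ⟨hsbot ω hω, ?_⟩
      intro b hb hlt
      rw [hC] at hb
      obtain ⟨T', hT', rfl⟩ := hb
      rcases hsub T' hT' ω hω hlt.le with h | h
      · exact h
      · exact absurd (h ▸ hlt) (lt_irrefl _)
  -- Part 3
  · intro a ha T hT haT hnb
    rcases Set.eq_empty_or_nonempty T with rfl | ⟨ω₁, hω₁⟩
    · right
      ext b
      simp only [Set.mem_setOf_eq, Set.mem_singleton_iff]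
      constructor
      · rintro ⟨_, hle⟩
        have : a = ⊥ := by rw [haT]; simp
        exact le_bot_iff.mp (this ▸ hle)
      · rintro rfl
        exact ⟨hbotC, bot_le⟩
    · by_cases hsing : ∀ ω ∈ T, ω = ω₁
      · have hTeq : T = {ω₁} :=
          subset_antisymm (fun ω h => hsing ω h) (Set.singleton_subset_iff.mpr hω₁)
        have haeq : a = s ω₁ := by rw [haT, hTeq]; simp
        left
        refine ⟨ω₁, hT hω₁, ?_⟩
        ext b
        simp only [Set.mem_setOf_eq, Set.mem_insert_iff, Set.mem_singleton_iff]
        constructor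
        · rintro ⟨hb, hle⟩
          rw [hC] at hb
          obtain ⟨T', hT', rfl⟩ := hb
          exact hsub T' hT' ω₁ (hT hω₁) (haeq ▸ hle)
        · rintro (rfl | rfl)
          · exact ⟨hbotC, bot_le⟩
          · exact ⟨hsC ω₁ (hT hω₁), haeq.ge⟩
      · exfalso
        push_neg at hsing
        obtain ⟨ω₂, hω₂, hne⟩ := hsing
        apply hnb
        refine ⟨s ω₁, hsC ω₁ (hT hω₁), ?_, hsbot ω₁ (hT hω₁), ?_,
          {ω₁}, Set.singleton_subset_iff.mpr hω₁, Set.singleton_nonempty _, ?_, by simp⟩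
        · rw [haT]; exact le_sSup (Set.mem_image_of_mem s hω₁)
        · intro heq
          have h1 : s ω₂ ≤ s ω₁ := by
            rw [heq, haT]; exact le_sSup (Set.mem_image_of_mem s hω₂)
          have h2 : ω₂ ⊆ ω₁ := by
            have := hmono _ _ h1
            rwa [hs ω₂ (hT hω₂), hs ω₁ (hT hω₁)] at this
          exact hne (hΩeq ω₂ (hT hω₂) ω₁ (hT hω₁) h2)
        · intro heq
          exact hne (by rw [← heq] at hω₂; exact hω₂)
end

section
/- Let (Σ, L, ξ) be a state property system, let C' = {⋀_i a_i | (a_i)_i a family of classical properties of (Σ, L, ξ)} (a complete lattice under the order inherited from L, with infima those of L and suprema ⋁'_i a_i = ⋀{b ∈ C' | a_i ≤ b for all i}), and define ξ' : Σ → P(C') by ξ'(q) = ξ(q) ∩ C'. Then (Σ, C', ξ') is a state property system. -/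
/-- Let `C' = {⋀_i a_i | (a_i) a family of classical properties}` (a complete
lattice under the order inherited from `L`, with infima those of `L` — so `C'` is closed
under `sInf` — with bottom `⊥`, top `⊤ = sInf ∅`) and `ξ' q = ξ q ∩ C'`.  Then
`(Σ, C', ξ')` is a state property system; spelled out:
(i) the bottom `⊥` of `C'` is in no `ξ' p`;
(ii) for every family `A ⊆ ξ' p`, its infimum (in `C'`, which agrees with `sInf` in `L`)
     belongs to `ξ' p`;
(iii) for `a, b ∈ C'`: `a ≤ b ↔ ∀ r, a ∈ ξ' r → b ∈ ξ' r`. -/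
theorem stmt_16 {S L : Type*} [CompleteLattice L] (P : SPS S L)
    (C' : Set L)
    (hC' : C' = {a : L | ∃ T : Set L, (∀ b ∈ T, P.IsClassical b) ∧ a = sInf T})
    (ξ' : S → Set L) (hξ' : ∀ q, ξ' q = P.ξ q ∩ C') :
    (∀ p, ⊥ ∉ ξ' p) ∧
    (∀ p, ∀ A ⊆ ξ' p, sInf A ∈ ξ' p) ∧
    (∀ a ∈ C', ∀ b ∈ C', (a ≤ b ↔ ∀ r, a ∈ ξ' r → b ∈ ξ' r)) := by
  refine ⟨?_, ?_, ?_⟩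
  · intro p hp
    rw [hξ'] at hp
    exact P.bot_not_mem p hp.1
  · intro p A hA
    rw [hξ']
    have hAξ : A ⊆ P.ξ p := fun a ha => ((hξ' p ▸ hA ha) : a ∈ P.ξ p ∩ C').1
    have hAC : A ⊆ C' := fun a ha => ((hξ' p ▸ hA ha) : a ∈ P.ξ p ∩ C').2
    refine ⟨P.sInf_mem p A hAξ, ?_⟩
    -- C' is closed under sInf
    rw [hC']
    choose T hT hTeq using fun a (ha : a ∈ C') => (hC' ▸ ha : a ∈ _)
    refine ⟨⋃ a : A, T a (hAC a.2), fun b hb => ?_, ?_⟩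
    · simp only [Set.mem_iUnion] at hb
      obtain ⟨a, hba⟩ := hb
      exact hT _ _ _ hba
    · apply le_antisymm
      · apply le_sInf
        intro b hb
        simp only [Set.mem_iUnion] at hb
        obtain ⟨a, hba⟩ := hb
        calc sInf A ≤ (a : L) := sInf_le a.2
          _ = sInf (T a (hAC a.2)) := hTeq _ _
          _ ≤ b := sInf_le hba
      · apply le_sInf
        intro a ha
        rw [hTeq a (hAC ha)]
        apply le_sInf
        intro b hb
        exact sInf_le (Set.mem_iUnion.2 ⟨⟨a, ha⟩, hb⟩)
  · intro a haC b hbC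
    constructor
    · intro hab r har
      rw [hξ'] at har ⊢
      exact ⟨(P.le_iff a b).1 hab r har.1, hbC⟩
    · intro h
      rw [P.le_iff]
      intro r har
      have := h r (by rw [hξ']; exact ⟨har, haC⟩)
      rw [hξ'] at this
      exact this.1
end

section
/- Let (Σ, L, ξ) be a state property system with Cartan map κ, let C' = {⋀_i a_i | (a_i)_i a family of classical properties of (Σ, L, ξ)}, and let ξ'(q) = ξ(q) ∩ C' with Cartan map κ'. Then the closure space (Σ, κ'(C')) is weakly zero-dimensional: it has a base consisting of clopen sets, i.e., there is a family B ⊆ κ'(C') of sets clopen in (Σ, κ'(C')) such that every member of κ'(C') is an intersection of members of B; in fact B may be taken to be the family {κ(a) | a a classical property of (Σ, L, ξ)}. -/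
/-- Let `C' = {⋀_i a_i | (a_i) a family of classical properties}`,
`ξ' q = ξ q ∩ C'` with Cartan map `κ' a = {p | a ∈ ξ' p}`.  Then the closure space
`(Σ, κ'(C'))` is weakly zero-dimensional: it has a base `B` of clopen sets, i.e. a family
`B ⊆ κ'(C')` of sets clopen in `(Σ, κ'(C'))` such that every member of `κ'(C')` is an
intersection of members of `B`; in fact one may take
`B = {κ a | a a classical property of (Σ, L, ξ)}`. -/
theorem stmt_17 {S L : Type*} [CompleteLattice L] (P : SPS S L)
    (C' : Set L)
    (hC' : C' = {a : L | ∃ T : Set L, (∀ b ∈ T, P.IsClassical b) ∧ a = sInf T})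
    (ξ' : S → Set L) (hξ' : ∀ q, ξ' q = P.ξ q ∩ C')
    (κ' : L → Set S) (hκ' : ∀ a, κ' a = {p | a ∈ ξ' p}) :
    ∃ B ⊆ κ' '' C',
      (∀ A ∈ B, IsClopenIn (κ' '' C') A) ∧
      (∀ F ∈ κ' '' C', ∃ G ⊆ B, F = ⋂₀ G) ∧
      B = P.cartan '' {a : L | P.IsClassical a} := by
  have htop : ∀ p, (⊤ : L) ∈ P.ξ p := by
    intro p
    simpa using P.sInf_mem p ∅ (by simp)
  -- classical elements are in C'
  have hclC : ∀ a : L, P.IsClassical a → a ∈ C' := by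
    intro a ha
    rw [hC']
    exact ⟨{a}, by simpa using ha, by simp⟩
  -- κ' = cartan on C'
  have hκeq : ∀ a ∈ C', κ' a = P.cartan a := by
    intro a ha
    ext p
    simp [hκ', hξ' p, SPS.cartan, ha]
  -- cartan of sInf of a set contained in ξ p
  have hcartInf : ∀ (T : Set L), P.cartan (sInf T) = ⋂ b ∈ T, P.cartan b := by
    intro T
    ext p
    simp only [SPS.cartan, Set.mem_setOf_eq, Set.mem_iInter]
    constructor
    · intro h b hb
      exact (P.le_iff (sInf T) b).mp (sInf_le hb) p h
    · intro h
      exact P.sInf_mem p T (fun b hb => h b hb)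
  refine ⟨P.cartan '' {a : L | P.IsClassical a}, ?_, ?_, ?_, rfl⟩
  · rintro A ⟨a, ha, rfl⟩
    exact ⟨a, hclC a ha, hκeq a (hclC a ha)⟩
  · rintro A ⟨a, ha, rfl⟩
    obtain ⟨c, hsup, hinf, hssr⟩ := ha
    -- cartan c = (cartan a)ᶜ
    have hcc : P.cartan c = (P.cartan a)ᶜ := by
      ext p
      simp only [SPS.cartan, Set.mem_setOf_eq, Set.mem_compl_iff]
      constructor
      · intro hc hA
        have hb : sInf {a, c} ∈ P.ξ p := by
          apply P.sInf_mem
          intro x hx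
          rcases hx with rfl | hx
          · exact hA
          · simp_all
        rw [show sInf {a, c} = a ⊓ c by simp, hinf] at hb
        exact P.bot_not_mem p hb
      · intro hA
        rcases hssr p (by rw [hsup]; exact htop p) with h | h
        · exact absurd h hA
        · exact h
    have hcCl : P.IsClassical c :=
      ⟨a, by rw [sup_comm]; exact hsup, by rw [inf_comm]; exact hinf,
        fun p hp => (hssr p (by rwa [sup_comm] at hp)).symm⟩
    constructor
    · exact ⟨a, hclC a ⟨c, hsup, hinf, hssr⟩, hκeq a (hclC a ⟨c, hsup, hinf, hssr⟩)⟩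
    · rw [← hcc]
      exact ⟨c, hclC c hcCl, hκeq c (hclC c hcCl)⟩
  · rintro F ⟨a, haC, rfl⟩
    obtain ⟨T, hT, rfl⟩ := hC'.symm ▸ haC
    refine ⟨P.cartan '' T, ?_, ?_⟩
    · rintro A ⟨b, hb, rfl⟩
      exact ⟨b, hT b hb, rfl⟩
    · rw [hκeq _ haC, hcartInf, Set.sInter_image]
end
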